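/- Let φ : I → R be a lower semicontinuous pseudoconvex function (with respect to the lower Dini derivative) on an interval I ⊆ R, and let Î be the set of global minimizers of φ over I. Then Î is a convex set (an interval, possibly empty or a single point). -/
import Mathlib


open Filter Set

/-- Lower Dini directional derivative of a function of one real variable. -/
noncomputable def dini (φ : ℝ → ℝ) (s u : ℝ) : ℝ :=
  liminf (fun h : ℝ => (φ (s + h * u) - φ s) / h) (nhdsWithin 0 (Ioi 0))

/-- Pseudoconvexity w.r.t. the lower Dini derivative, one variable. -/
def PseudoconvexOn (φ : ℝ → ℝ) (I : Set ℝ) : Prop :=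
  ∀ s ∈ I, ∀ t ∈ I, φ t < φ s → dini φ s (t - s) < 0

/-- A direction `u` is admissible at `s` relative to `I`. -/
def Admissible (I : Set ℝ) (s u : ℝ) : Prop :=
  ∃ δ > 0, ∀ h ∈ Ioo (0:ℝ) δ, s + h * u ∈ I

/-- `s` is a stationary point of `φ` relative to `I`. -/
def Stationary (φ : ℝ → ℝ) (I : Set ℝ) (s : ℝ) : Prop :=
  ∀ u : ℝ, Admissible I s u → 0 ≤ dini φ s u

/-- The set of global minimizers of `φ` over `I`. -/
def ArgminSet (φ : ℝ → ℝ) (I : Set ℝ) : Set ℝ := {t ∈ I | ∀ s ∈ I, φ t ≤ φ s}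

/-- A lower semicontinuous function attains its minimum on a nonempty compact set. -/
lemma lsc_exists_min {K : Set ℝ} (hK : IsCompact K) (hne : K.Nonempty) {φ : ℝ → ℝ}
    (h : LowerSemicontinuousOn φ K) : ∃ t ∈ K, ∀ s ∈ K, φ t ≤ φ s := by
  by_contra hcon
  push_neg at hcon
  have hcompact : CompactSpace K := isCompact_iff_compactSpace.1 hK
  have hf : LowerSemicontinuous (fun x : K => φ x) := by
    intro x y hy
    exact (eventually_nhds_subtype_iff K x (fun t => y < φ t)).2 (h x x.2 y hy)
  have hopen : ∀ s : K, IsOpen {x : K | φ s < φ x} :=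
    fun s => hf.isOpen_preimage (φ s)
  have hcover : (univ : Set K) ⊆ ⋃ s : K, {x : K | φ s < φ x} := by
    intro x _
    obtain ⟨s, hs, hlt⟩ := hcon x x.2
    exact mem_iUnion.2 ⟨⟨s, hs⟩, hlt⟩
  obtain ⟨t, ht⟩ := isCompact_univ.elim_finite_subcover _ hopen hcover
  obtain ⟨x0⟩ := hne.to_subtype
  have hx0 : (x0 : K) ∈ ⋃ i ∈ t, {x : K | φ i < φ x} := ht (mem_univ _)
  have htne : t.Nonempty := by
    rcases mem_iUnion₂.1 hx0 with ⟨i, hi, _⟩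
    exact ⟨i, hi⟩
  obtain ⟨s0, hs0t, hs0min⟩ := t.exists_min_image (fun s : K => φ s) htne
  have hs0 : (s0 : K) ∈ ⋃ i ∈ t, {x : K | φ i < φ x} := ht (mem_univ _)
  rcases mem_iUnion₂.1 hs0 with ⟨i, hi, hlt⟩
  exact absurd (hs0min i hi) (not_le.2 hlt)

/-- If the lower Dini derivative is negative, there are arbitrarily small positive
steps strictly decreasing `φ`. -/
lemma descent_of_dini_neg {φ : ℝ → ℝ} {s u : ℝ} (h : dini φ s u < 0) :
    ∀ δ > 0, ∃ h' ∈ Ioo (0:ℝ) δ, φ (s + h' * u) < φ s := by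
  intro δ hδ
  have hfreq : ∃ᶠ h' in nhdsWithin 0 (Ioi 0),
      (φ (s + h' * u) - φ s) / h' < 0 := by
    set f := fun h' : ℝ => (φ (s + h' * u) - φ s) / h' with hf
    by_cases hb : BddAbove {a : ℝ | ∀ᶠ h' in nhdsWithin 0 (Ioi 0), a ≤ f h'}
    · have hcob : IsCoboundedUnder (· ≥ ·) (nhdsWithin 0 (Ioi 0)) f := by
        obtain ⟨b, hbmem⟩ := hb
        refine ⟨b, fun a ha => ?_⟩
        exact hbmem (eventually_map.1 ha)
      exact frequently_lt_of_liminf_lt hcob h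
    · exfalso
      have : dini φ s u = 0 := by
        rw [dini, liminf_eq, Real.sSup_of_not_bddAbove hb]
      rw [this] at h
      exact lt_irrefl _ h
  have hev : ∀ᶠ h' in nhdsWithin 0 (Ioi 0), h' ∈ Ioo (0:ℝ) δ := by
    filter_upwards [Ioo_mem_nhdsGT_of_mem (by constructor <;> simp [hδ] : (0:ℝ) ∈ Ico 0 δ)]
      with x hx using hx
  obtain ⟨h', hneg, hmem⟩ := (hfreq.and_eventually hev).exists
  refine ⟨h', hmem, ?_⟩
  rcases div_neg_iff.1 hneg with ⟨hn, hp⟩ | ⟨hn, hp⟩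
  · linarith [hmem.1]
  · linarith

theorem stmt3 (I : Set ℝ) (hI : I.OrdConnected) (φ : ℝ → ℝ)
    (hlsc : LowerSemicontinuousOn φ I) (hpc : PseudoconvexOn φ I) :
    Convex ℝ (ArgminSet φ I) := by
  rw [convex_iff_ordConnected]
  constructor
  intro a ha b hb x hx
  rcases ha with ⟨haI, hamin⟩
  rcases hb with ⟨hbI, hbmin⟩
  have hab : Icc a b ⊆ I := hI.out haI hbI
  have hxI : x ∈ I := hab hx
  refine ⟨hxI, fun s hs => ?_⟩
  by_contra hxgt
  push_neg at hxgt
  -- φ x > φ a = min value m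
  have hm : φ a < φ x := lt_of_le_of_lt (hamin s hs) hxgt
  have hmb : φ b < φ x := lt_of_le_of_lt (hbmin s hs) hxgt
  have hax : a < x := by
    rcases lt_or_eq_of_le hx.1 with h | h
    · exact h
    · exact absurd hm (by rw [h]; exact lt_irrefl _)
  have hxb : x < b := by
    rcases lt_or_eq_of_le hx.2 with h | h
    · exact h
    · exact absurd hmb (by rw [h]; exact lt_irrefl _)
  -- lower semicontinuity: φ > φ a on a neighborhood of x within I
  have hev : ∀ᶠ t in nhdsWithin x I, φ a < φ t := hlsc x hxI (φ a) hm
  rw [eventually_iff, Metric.mem_nhdsWithin_iff] at hev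
  obtain ⟨ε, hε, hball⟩ := hev
  set δ : ℝ := min (ε / 2) (min ((x - a) / 2) ((b - x) / 2)) with hδdef
  have hδpos : 0 < δ := by
    apply lt_min (by linarith) (lt_min (by linarith) (by linarith))
  have hδε : δ < ε := lt_of_le_of_lt (min_le_left _ _) (by linarith)
  have hδa : a < x - δ := by
    have : δ ≤ (x - a) / 2 := le_trans (min_le_right _ _) (min_le_left _ _)
    linarith
  have hδb : x + δ < b := by
    have : δ ≤ (b - x) / 2 := le_trans (min_le_right _ _) (min_le_right _ _)
    linarith
  set K : Set ℝ := Icc (x - δ) (x + δ) with hKdef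
  have hKI : K ⊆ I := fun t ht => hab ⟨by linarith [ht.1], by linarith [ht.2]⟩
  have hKgt : ∀ t ∈ K, φ a < φ t := by
    intro t ht
    refine hball ⟨?_, hKI ht⟩
    rw [Metric.mem_ball, Real.dist_eq, abs_sub_lt_iff]
    constructor <;> [linarith [ht.2]; linarith [ht.1]]
  -- min of φ on K
  obtain ⟨t, htK, htmin⟩ := lsc_exists_min isCompact_Icc
    (nonempty_Icc.2 (by linarith)) (hlsc.mono hKI)
  have htI : t ∈ I := hKI htK
  have htgt : φ a < φ t := hKgt t htK
  -- two cases depending on position of t in K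
  by_cases hcase : t < x + δ
  · -- descend toward b
    have hdini : dini φ t (b - t) < 0 := hpc t htI b hbI (lt_of_le_of_lt (hbmin a haI) htgt)
    have hbt : 0 < b - t := by linarith [htK.2]
    obtain ⟨h', hh', hdec⟩ := descent_of_dini_neg hdini ((x + δ - t) / (b - t))
      (div_pos (by linarith) hbt)
    have hmem : t + h' * (b - t) ∈ K := by
      have h1 : 0 < h' * (b - t) := mul_pos hh'.1 hbt
      have h2 : h' * (b - t) < x + δ - t := by
        calc h' * (b - t) < ((x + δ - t) / (b - t)) * (b - t) :=
              mul_lt_mul_of_pos_right hh'.2 hbt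
          _ = x + δ - t := by field_simp
      constructor
      · linarith [htK.1]
      · linarith
    exact absurd (htmin _ hmem) (not_le.2 hdec)
  · -- t = x + δ; descend toward a
    push_neg at hcase
    have hteq : t = x + δ := le_antisymm htK.2 hcase
    have hdini : dini φ t (a - t) < 0 := hpc t htI a haI htgt
    have hat : a - t < 0 := by linarith
    obtain ⟨h', hh', hdec⟩ := descent_of_dini_neg hdini ((t - (x - δ)) / (t - a))
      (div_pos (by linarith) (by linarith))
    have hmem : t + h' * (a - t) ∈ K := by
      have hta : 0 < t - a := by linarith
      have h1 : h' * (t - a) < t - (x - δ) := by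
        calc h' * (t - a) < ((t - (x - δ)) / (t - a)) * (t - a) :=
              mul_lt_mul_of_pos_right hh'.2 hta
          _ = t - (x - δ) := by field_simp
      have h2 : 0 < h' * (t - a) := mul_pos hh'.1 hta
      constructor
      · nlinarith
      · nlinarith
    exact absurd (htmin _ hmem) (not_le.2 hdec)
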